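/- The family of 2-labelled graphs S_k^∘ (k ≥ 3), where S_k^∘ is S_k with vertices x_1, y_1, x_k, y_k coloured white and all other vertices black, forms an infinite antichain under the labelled induced subgraph relation: for distinct k < k', there is no injective map from V(S_k^∘) to V(S_{k'}^∘) that preserves both adjacency/non-adjacency and vertex colours. -/

import Mathlib

def SAdj (k : ℕ) : (Fin k ⊕ Fin k) → (Fin k ⊕ Fin k) → Prop
  | Sum.inl i, Sum.inr j => j.val = i.val ∨ i.val + 2 ≤ j.val
  | Sum.inr j, Sum.inl i => j.val = i.val ∨ i.val + 2 ≤ j.val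
  | _, _ => False

/-- The graph `S_k`: vertices `Sum.inl i` are the `x_{i+1}` and `Sum.inr j` are the
`y_{j+1}` (0-indexed), with `x_i ~ y_j` iff `j = i` or `j ≥ i + 2`. -/
def SG (k : ℕ) : SimpleGraph (Fin k ⊕ Fin k) where
  Adj := SAdj k
  symm := by constructor; rintro (i|i) (j|j) h <;> simp_all [SAdj]
  loopless := by constructor; rintro (i|i) h <;> simp_all [SAdj]

/-- The 2-colouring of S_k: the vertices x_1, y_1, x_k, y_k are white (true),
all others black (false). -/
def Scolor (k : ℕ) : (Fin k ⊕ Fin k) → Bool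
  | Sum.inl i => decide (i.val = 0 ∨ i.val = k - 1)
  | Sum.inr i => decide (i.val = 0 ∨ i.val = k - 1)

lemma SG_adj_lr {k : ℕ} (i j : Fin k) :
    (SG k).Adj (Sum.inl i) (Sum.inr j) ↔ (j.val = i.val ∨ i.val + 2 ≤ j.val) := Iff.rfl

lemma SG_adj_rl {k : ℕ} (i j : Fin k) :
    (SG k).Adj (Sum.inr j) (Sum.inl i) ↔ (j.val = i.val ∨ i.val + 2 ≤ j.val) := Iff.rfl

lemma SG_adj_ll {k : ℕ} (i j : Fin k) :
    (SG k).Adj (Sum.inl i) (Sum.inl j) ↔ False := Iff.rfl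

lemma SG_adj_rr {k : ℕ} (i j : Fin k) :
    (SG k).Adj (Sum.inr i) (Sum.inr j) ↔ False := Iff.rfl

lemma white_cases (k' : ℕ) (hk' : 1 ≤ k') (u : Fin k' ⊕ Fin k') (h : Scolor k' u = true) :
    u = Sum.inl ⟨0, by omega⟩ ∨ u = Sum.inl ⟨k' - 1, by omega⟩ ∨
      u = Sum.inr ⟨0, by omega⟩ ∨ u = Sum.inr ⟨k' - 1, by omega⟩ := by
  rcases u with i | i <;> simp only [Scolor, decide_eq_true_eq] at h
  · rcases h with h | h
    · exact Or.inl (congrArg Sum.inl (Fin.ext h))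
    · exact Or.inr (Or.inl (congrArg Sum.inl (Fin.ext h)))
  · rcases h with h | h
    · exact Or.inr (Or.inr (Or.inl (congrArg Sum.inr (Fin.ext h))))
    · exact Or.inr (Or.inr (Or.inr (congrArg Sum.inr (Fin.ext h))))

/-- the reversal automorphism of `S_{k'}` -/
def Ssigma (k' : ℕ) : (Fin k' ⊕ Fin k') → (Fin k' ⊕ Fin k')
  | Sum.inl i => Sum.inr ⟨k' - 1 - i.val, by have := i.isLt; omega⟩
  | Sum.inr j => Sum.inl ⟨k' - 1 - j.val, by have := j.isLt; omega⟩

lemma Ssigma_inj (k' : ℕ) : Function.Injective (Ssigma k') := by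
  rintro (i|i) (j|j) h <;>
    simp only [Ssigma, Sum.inl.injEq, Sum.inr.injEq, Fin.mk.injEq, reduceCtorEq] at h ⊢
  · have hi := i.isLt; have hj := j.isLt; exact Fin.ext (by omega)
  · have hi := i.isLt; have hj := j.isLt; exact Fin.ext (by omega)

lemma Ssigma_adj (k' : ℕ) (u v : Fin k' ⊕ Fin k') :
    (SG k').Adj u v ↔ (SG k').Adj (Ssigma k' u) (Ssigma k' v) := by
  rcases u with i | i <;> rcases v with j | j <;>
    (have hi := i.isLt; have hj := j.isLt;
     simp only [Ssigma, SG_adj_lr, SG_adj_rl, SG_adj_ll, SG_adj_rr]) <;> omega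

lemma Sk_key (k k' : ℕ) (hk : 3 ≤ k) (hkk : k < k')
    (φ : Fin k ⊕ Fin k → Fin k' ⊕ Fin k')
    (hinj : Function.Injective φ)
    (hadj : ∀ u v, (SG k).Adj u v ↔ (SG k').Adj (φ u) (φ v))
    (h0 : φ (Sum.inl ⟨0, by omega⟩) = Sum.inl ⟨0, by omega⟩)
    (h0' : φ (Sum.inr ⟨0, by omega⟩) = Sum.inr ⟨0, by omega⟩)
    (hd : φ (Sum.inr ⟨k - 1, by omega⟩) = Sum.inr ⟨k' - 1, by omega⟩) :
    False := by
  have main : ∀ n : ℕ, n ≤ k - 2 → ∀ i : Fin k, i.val = n →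
      φ (Sum.inl i) = Sum.inl ⟨i.val, by have := i.isLt; omega⟩ ∧
      φ (Sum.inr i) = Sum.inr ⟨i.val, by have := i.isLt; omega⟩ := by
    intro n
    induction n using Nat.strong_induction_on with
    | _ n ih =>
      intro hn i hiv
      by_cases hn0 : n = 0
      · have hi0 : i = ⟨0, by omega⟩ := Fin.ext (by simp; omega)
        rw [hi0]
        exact ⟨h0, h0'⟩
      · -- step: 1 ≤ n
        have hn1 : 1 ≤ n := by omega
        have ihp := ih (n - 1) (by omega) (by omega) ⟨n - 1, by omega⟩ rfl
        have notim : ∀ m : ℕ, (hm : m < n) →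
            φ (Sum.inl i) ≠ Sum.inl ⟨m, by omega⟩ ∧
            φ (Sum.inr i) ≠ Sum.inr ⟨m, by omega⟩ := by
          intro m hm
          have h1 := ih m (by omega) (by omega) ⟨m, by omega⟩ rfl
          constructor
          · intro he
            have h2 := hinj (he.trans h1.1.symm)
            simp only [Sum.inl.injEq, Fin.ext_iff] at h2
            omega
          · intro he
            have h2 := hinj (he.trans h1.2.symm)
            simp only [Sum.inr.injEq, Fin.ext_iff] at h2
            omega
        have hxy : (SG k).Adj (Sum.inl i) (Sum.inr i) := Or.inl rfl
        have hxyi := (hadj _ _).mp hxy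
        rcases hu : φ (Sum.inl i) with p | p <;> rcases hv : φ (Sum.inr i) with q | q <;>
          rw [hu, hv] at hxyi
        · exact absurd hxyi (by simp [SG_adj_ll])
        · -- good case : u = inl p, v = inr q
          have hp : n ≤ p.val := by
            by_contra hcc
            push_neg at hcc
            exact (notim p.val hcc).1 hu
          have hq : n ≤ q.val := by
            by_contra hcc
            push_neg at hcc
            exact (notim q.val hcc).2 hv
          have hnadj : ¬ (SG k).Adj (Sum.inl ⟨n - 1, by omega⟩) (Sum.inr i) := by
            simp only [SG_adj_lr, Fin.val_mk]
            omega
          have h2 : ¬ (SG k').Adj (φ (Sum.inl ⟨n - 1, by omega⟩)) (φ (Sum.inr i)) :=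
            fun h => hnadj ((hadj _ _).mpr h)
          rw [ihp.1, hv] at h2
          simp only [SG_adj_lr, Fin.val_mk, not_or] at h2
          simp only [SG_adj_lr, Fin.val_mk] at hxyi
          exact ⟨congrArg Sum.inl (Fin.ext (show p.val = i.val by omega)),
                 congrArg Sum.inr (Fin.ext (show q.val = i.val by omega))⟩
        · -- u = inr p, v = inl q
          have hx0 : ¬ (SG k).Adj (Sum.inl ⟨0, by omega⟩) (Sum.inl i) := by
            simp [SG_adj_ll]
          have h2 : ¬ (SG k').Adj (φ (Sum.inl ⟨0, by omega⟩)) (φ (Sum.inl i)) :=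
            fun h => hx0 ((hadj _ _).mpr h)
          rw [h0, hu] at h2
          simp only [SG_adj_lr, Fin.val_mk, not_or] at h2
          have hyk : ¬ (SG k).Adj (Sum.inr i) (Sum.inr ⟨k - 1, by omega⟩) := by
            simp [SG_adj_rr]
          have h4 : ¬ (SG k').Adj (φ (Sum.inr i)) (φ (Sum.inr ⟨k - 1, by omega⟩)) :=
            fun h => hyk ((hadj _ _).mpr h)
          rw [hv, hd] at h4
          simp only [SG_adj_lr, Fin.val_mk, not_or] at h4
          simp only [SG_adj_rl, Fin.val_mk] at hxyi
          have hqlt := q.isLt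
          omega
        · exact absurd hxyi (by simp [SG_adj_rr])
  have hm := main (k - 2) (le_refl _) ⟨k - 2, by omega⟩ rfl
  have hnadj : ¬ (SG k).Adj (Sum.inl ⟨k - 2, by omega⟩) (Sum.inr ⟨k - 1, by omega⟩) := by
    simp only [SG_adj_lr, Fin.val_mk]
    omega
  have h2 : ¬ (SG k').Adj (φ (Sum.inl ⟨k - 2, by omega⟩)) (φ (Sum.inr ⟨k - 1, by omega⟩)) :=
    fun h => hnadj ((hadj _ _).mpr h)
  rw [hm.1, hd] at h2
  simp only [SG_adj_lr, Fin.val_mk, not_or] at h2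
  omega

/-- the coloured graphs S_k^∘ (k ≥ 3) form an antichain under the
labelled induced subgraph relation: for k < k'\'' there is no injective map
from S_k^∘ to S_{k'\''}^∘ preserving adjacency, non-adjacency and colours. -/
theorem Sk_labelled_antichain (k k' : ℕ) (hk : 3 ≤ k) (hkk : k < k') :
    ¬ ∃ φ : Fin k ⊕ Fin k → Fin k' ⊕ Fin k',
        Function.Injective φ ∧
        (∀ u v, (SG k).Adj u v ↔ (SG k').Adj (φ u) (φ v)) ∧
        (∀ u, Scolor k' (φ u) = Scolor k u) := by
  rintro ⟨φ, hinj, hadj, hcol⟩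
  have ha := white_cases k' (by omega) (φ (Sum.inl ⟨0, by omega⟩))
    (by rw [hcol]; simp [Scolor])
  have hb := white_cases k' (by omega) (φ (Sum.inr ⟨0, by omega⟩))
    (by rw [hcol]; simp [Scolor])
  have hc := white_cases k' (by omega) (φ (Sum.inl ⟨k - 1, by omega⟩))
    (by rw [hcol]; simp [Scolor])
  have hD := white_cases k' (by omega) (φ (Sum.inr ⟨k - 1, by omega⟩))
    (by rw [hcol]; simp [Scolor])
  -- adjacency facts among the images of the four white vertices
  have hab : (SG k').Adj (φ (Sum.inl ⟨0, by omega⟩)) (φ (Sum.inr ⟨0, by omega⟩)) :=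
    (hadj _ _).mp (Or.inl rfl)
  have had : (SG k').Adj (φ (Sum.inl ⟨0, by omega⟩)) (φ (Sum.inr ⟨k - 1, by omega⟩)) :=
    (hadj _ _).mp (by simp only [SG_adj_lr, Fin.val_mk]; omega)
  have hcd : (SG k').Adj (φ (Sum.inl ⟨k - 1, by omega⟩)) (φ (Sum.inr ⟨k - 1, by omega⟩)) :=
    (hadj _ _).mp (Or.inl rfl)
  have nac : ¬ (SG k').Adj (φ (Sum.inl ⟨0, by omega⟩)) (φ (Sum.inl ⟨k - 1, by omega⟩)) :=
    fun h => ((SG_adj_ll _ _).mp ((hadj _ _).mpr h))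
  -- distinctness of images
  have dab : φ (Sum.inl (⟨0, by omega⟩ : Fin k)) ≠ φ (Sum.inr ⟨0, by omega⟩) :=
    fun h => by simpa using hinj h
  have dac : φ (Sum.inl (⟨0, by omega⟩ : Fin k)) ≠ φ (Sum.inl ⟨k - 1, by omega⟩) :=
    fun h => by have := hinj h; simp [Fin.ext_iff] at this; omega
  have dbd : φ (Sum.inr (⟨0, by omega⟩ : Fin k)) ≠ φ (Sum.inr ⟨k - 1, by omega⟩) :=
    fun h => by have := hinj h; simp [Fin.ext_iff] at this; omega
  rcases ha with ha | ha | ha | ha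
  · -- φ(x₁) = x₁'
    rcases hc with hc | hc | hc | hc
    · exact dac (ha.trans hc.symm)
    · -- C = inl (k'-1), correct
      rcases hD with hD | hD | hD | hD
      · rw [hc, hD] at hcd; exact (SG_adj_ll _ _).mp hcd
      · rw [hc, hD] at hcd; exact (SG_adj_ll _ _).mp hcd
      · rw [hc, hD] at hcd; simp only [SG_adj_lr, Fin.val_mk] at hcd; omega
      · -- D = inr (k'-1), correct
        rcases hb with hb | hb | hb | hb
        · exact dab (ha.trans hb.symm)
        · rw [ha, hb] at hab; exact (SG_adj_ll _ _).mp hab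
        · -- the identity configuration
          exact Sk_key k k' hk hkk φ hinj hadj ha hb hD
        · exact dbd (hb.trans hD.symm)
    · rw [ha, hc] at nac; exact nac (Or.inl rfl)
    · rw [ha, hc] at nac; exact nac (by simp only [SG_adj_lr, Fin.val_mk]; omega)
  · -- φ(x₁) = inl (k'-1) : impossible
    rcases hb with hb | hb | hb | hb
    · rw [ha, hb] at hab; exact (SG_adj_ll _ _).mp hab
    · rw [ha, hb] at hab; exact (SG_adj_ll _ _).mp hab
    · rw [ha, hb] at hab; simp only [SG_adj_lr, Fin.val_mk] at hab; omega
    · rcases hD with hD | hD | hD | hD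
      · rw [ha, hD] at had; exact (SG_adj_ll _ _).mp had
      · rw [ha, hD] at had; exact (SG_adj_ll _ _).mp had
      · rw [ha, hD] at had; simp only [SG_adj_lr, Fin.val_mk] at had; omega
      · exact dbd (hb.trans hD.symm)
  · -- φ(x₁) = inr 0 : impossible
    rcases hb with hb | hb | hb | hb
    · rcases hD with hD | hD | hD | hD
      · exact dbd (hb.trans hD.symm)
      · rw [ha, hD] at had; simp only [SG_adj_rl, Fin.val_mk] at had; omega
      · rw [ha, hD] at had; exact (SG_adj_rr _ _).mp had
      · rw [ha, hD] at had; exact (SG_adj_rr _ _).mp had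
    · rw [ha, hb] at hab; simp only [SG_adj_rl, Fin.val_mk] at hab; omega
    · rw [ha, hb] at hab; exact (SG_adj_rr _ _).mp hab
    · rw [ha, hb] at hab; exact (SG_adj_rr _ _).mp hab
  · -- φ(x₁) = inr (k'-1) : the reversed configuration
    rcases hc with hc | hc | hc | hc
    · rw [ha, hc] at nac; exact nac (by simp only [SG_adj_rl, Fin.val_mk]; omega)
    · rw [ha, hc] at nac; exact nac ((SG_adj_rl _ _).mpr (Or.inl rfl))
    · -- C = inr 0
      rcases hD with hD | hD | hD | hD
      · -- D = inl 0, correct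
        rcases hb with hb | hb | hb | hb
        · exact dbd (hb.trans hD.symm)
        · -- B = inl (k'-1) : reversed configuration, compose with Ssigma
          apply Sk_key k k' hk hkk (Ssigma k' ∘ φ) ((Ssigma_inj k').comp hinj)
            (fun u v => (hadj u v).trans (Ssigma_adj k' _ _))
          · show Ssigma k' (φ (Sum.inl ⟨0, by omega⟩)) = _
            rw [ha]
            simp only [Ssigma, Sum.inl.injEq]
            exact Fin.ext (by simp)
          · show Ssigma k' (φ (Sum.inr ⟨0, by omega⟩)) = _
            rw [hb]
            simp only [Ssigma, Sum.inr.injEq]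
            exact Fin.ext (by simp)
          · show Ssigma k' (φ (Sum.inr ⟨k - 1, by omega⟩)) = _
            rw [hD]
            simp only [Ssigma, Sum.inr.injEq]
            exact Fin.ext (by simp)
        · rw [ha, hb] at hab; exact (SG_adj_rr _ _).mp hab
        · rw [ha, hb] at hab; exact (SG_adj_rr _ _).mp hab
      · rw [hc, hD] at hcd; simp only [SG_adj_rl, Fin.val_mk] at hcd; omega
      · rw [hc, hD] at hcd; exact (SG_adj_rr _ _).mp hcd
      · rw [hc, hD] at hcd; exact (SG_adj_rr _ _).mp hcd
    · exact dac (ha.trans hc.symm)
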